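/- Let (Ω, 𝔉, P) be a probability space and (Y_i)_{i≥1} independent ℝ^d-valued random vectors, each with distribution P_{θ*}. For each n, let θ̂_n : Ω → ℝ^d be measurable and satisfy, for P-almost every ω, ∑_{i=1}^n log L(Y_i(ω), θ̂_n(ω)) ≥ ∑_{i=1}^n log L(Y_i(ω), θ) for all θ ∈ ℝ^d (i.e., θ̂_n is a maximum likelihood estimator). Then ρ(θ̂_n, θ*) = min_{g∈G} ‖g θ̂_n − θ*‖ converges to 0 in P-probability: for every ε > 0, P( min_{g∈G} ‖g θ̂_n − θ*‖ > ε ) → 0 as n → ∞. -/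

import Mathlib

open MeasureTheory
open scoped BigOperators RealInnerProductSpace

noncomputable section

abbrev Euc (d : ℕ) := EuclideanSpace ℝ (Fin d)
abbrev Iso (d : ℕ) := Euc d ≃ₗᵢ[ℝ] Euc d

/-- The average `H̄ = (1/|H|) ∑_{h∈H} h` of a finite subgroup of linear isometries. -/
def groupAvg {d : ℕ} (H : Subgroup (Iso d)) [Fintype H] : Euc d →ₗ[ℝ] Euc d :=
  (Fintype.card H : ℝ)⁻¹ • ∑ h : H, ((h : Iso d).toLinearEquiv : Euc d →ₗ[ℝ] Euc d)

/-- The density `L(y,θ)` of the Gaussian mixture `P_θ = (1/|G|) ∑_{g∈G} N(gθ, I_d)`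
with respect to Lebesgue measure on `ℝ^d`. -/
def density {d : ℕ} (G : Subgroup (Iso d)) [Fintype G] (y θ : Euc d) : ℝ :=
  (1 / ((Fintype.card G : ℝ) * (2 * Real.pi) ^ ((d : ℝ) / 2))) *
    ∑ g : G, Real.exp (-‖y - (g : Iso d) θ‖ ^ 2 / 2)

/-- The population log-likelihood `Ψ(θ) = ∫ log L(y,θ) · L(y,θ*) dy`. -/
def popLogLik {d : ℕ} (G : Subgroup (Iso d)) [Fintype G] (θstar θ : Euc d) : ℝ :=
  ∫ y : Euc d, Real.log (density G y θ) * density G y θstar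

namespace MLEAux

open Real Filter

variable {d : ℕ}

/-- sqrt of a finite sum is at most the sum of sqrts. -/
lemma sqrt_sum_le {ι : Type*} (s : Finset ι) (v : ι → ℝ) (hv : ∀ i ∈ s, 0 ≤ v i) :
    Real.sqrt (∑ i ∈ s, v i) ≤ ∑ i ∈ s, Real.sqrt (v i) := by
  classical
  induction s using Finset.induction_on with
  | empty => simp
  | @insert a s ha ih =>
    rw [Finset.sum_insert ha, Finset.sum_insert ha]
    have h1 : Real.sqrt (v a + ∑ i ∈ s, v i) ≤ Real.sqrt (v a) + Real.sqrt (∑ i ∈ s, v i) := by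
      have hva : 0 ≤ v a := hv a (Finset.mem_insert_self a s)
      have hvs : 0 ≤ ∑ i ∈ s, v i := Finset.sum_nonneg fun i hi => hv i (Finset.mem_insert_of_mem hi)
      have : v a + ∑ i ∈ s, v i ≤ (Real.sqrt (v a) + Real.sqrt (∑ i ∈ s, v i)) ^ 2 := by
        rw [add_sq, Real.sq_sqrt hva, Real.sq_sqrt hvs]
        nlinarith [Real.sqrt_nonneg (v a), Real.sqrt_nonneg (∑ i ∈ s, v i)]
      calc Real.sqrt (v a + ∑ i ∈ s, v i) ≤
          Real.sqrt ((Real.sqrt (v a) + Real.sqrt (∑ i ∈ s, v i)) ^ 2) := Real.sqrt_le_sqrt this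
        _ = Real.sqrt (v a) + Real.sqrt (∑ i ∈ s, v i) := Real.sqrt_sq (by positivity)
    exact h1.trans (by gcongr; exact ih fun i hi => hv i (Finset.mem_insert_of_mem hi))

/-- sqrt of a finite product is the product of sqrts. -/
lemma sqrt_prod {ι : Type*} (s : Finset ι) (v : ι → ℝ) (hv : ∀ i ∈ s, 0 ≤ v i) :
    Real.sqrt (∏ i ∈ s, v i) = ∏ i ∈ s, Real.sqrt (v i) := by
  classical
  induction s using Finset.induction_on with
  | empty => simp
  | @insert a s ha ih =>
    rw [Finset.prod_insert ha, Finset.prod_insert ha,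
      Real.sqrt_mul (hv a (Finset.mem_insert_self a s)),
      ih fun i hi => hv i (Finset.mem_insert_of_mem hi)]

lemma gauss_integrable {b : ℝ} (hb : 0 < b) (c : Euc d) :
    Integrable (fun y : Euc d => Real.exp (-b * ‖y - c‖ ^ 2)) := by
  have base : Integrable (fun v : Euc d => Real.exp (-b * ‖v‖ ^ 2)) := by
    have := (GaussianFourier.integrable_cexp_neg_mul_sq_norm_add (V := Euc d) (b := (b : ℂ))
      (by simpa using hb) 0 0).norm
    simpa [Complex.norm_exp, ← Complex.ofReal_pow] using this
  exact base.comp_sub_right c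

lemma gauss_integral (c : Euc d) :
    ∫ y : Euc d, Real.exp (-‖y - c‖ ^ 2 / 2) = (2 * π) ^ ((d : ℝ) / 2) := by
  have h2 : (fun y : Euc d => Real.exp (-‖y - c‖ ^ 2 / 2))
      = fun y : Euc d => Real.exp (-(1 / 2 : ℝ) * ‖y - c‖ ^ 2) := by
    funext y; ring_nf
  rw [h2, integral_sub_right_eq_self (fun y : Euc d => Real.exp (-(1 / 2 : ℝ) * ‖y‖ ^ 2)) c,
    GaussianFourier.integral_rexp_neg_mul_sq_norm (by norm_num : (0:ℝ) < 1/2),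
    finrank_euclideanSpace_fin]
  congr 1; ring

end MLEAux
namespace MLEAux2
open Real Filter MLEAux

variable {d : ℕ} (G : Subgroup (Iso d)) [Fintype G]

/-- The normalization constant. -/
def Cd : ℝ := 1 / ((Fintype.card G : ℝ) * (2 * Real.pi) ^ ((d : ℝ) / 2))

lemma card_pos : (0 : ℝ) < (Fintype.card G : ℝ) := by
  have : 0 < Fintype.card G := Fintype.card_pos
  exact_mod_cast this

lemma twopi_pos : (0 : ℝ) < (2 * Real.pi) ^ ((d : ℝ) / 2) :=
  Real.rpow_pos_of_pos (by positivity) _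

lemma Cd_pos : 0 < Cd (d := d) G := by
  unfold Cd
  have := card_pos G; have := twopi_pos (d := d)
  positivity

lemma density_eq (y θ : Euc d) :
    density G y θ = Cd G * ∑ g : G, Real.exp (-‖y - (g : Iso d) θ‖ ^ 2 / 2) := rfl

lemma density_pos (y θ : Euc d) : 0 < density G y θ := by
  rw [density_eq]
  have : (0:ℝ) < ∑ g : G, Real.exp (-‖y - (g : Iso d) θ‖ ^ 2 / 2) :=
    Finset.sum_pos (fun g _ => Real.exp_pos _) ⟨1, Finset.mem_univ 1⟩
  exact mul_pos (Cd_pos G) this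

lemma density_le (y θ : Euc d) : density G y θ ≤ Cd G * Fintype.card G := by
  rw [density_eq]
  have h : ∑ g : G, Real.exp (-‖y - (g : Iso d) θ‖ ^ 2 / 2) ≤
      ∑ _g : G, (1:ℝ) := by
    apply Finset.sum_le_sum
    intro g _
    rw [show (1:ℝ) = Real.exp 0 by simp]
    apply Real.exp_le_exp.2
    have : (0:ℝ) ≤ ‖y - (g : Iso d) θ‖ ^ 2 := by positivity
    linarith
  have h2 : (∑ _g : G, (1:ℝ)) = (Fintype.card G : ℝ) := by simp
  calc Cd G * ∑ g : G, Real.exp (-‖y - (g : Iso d) θ‖ ^ 2 / 2)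
      ≤ Cd G * ∑ _g : G, (1:ℝ) := by
        apply mul_le_mul_of_nonneg_left h (le_of_lt (Cd_pos G))
    _ = Cd G * Fintype.card G := by rw [h2]

lemma density_continuous (θ : Euc d) : Continuous (fun y : Euc d => density G y θ) := by
  simp only [density_eq]
  apply Continuous.mul continuous_const
  apply continuous_finset_sum
  intro g _
  exact Real.continuous_exp.comp
    ((((continuous_id.sub continuous_const).norm.pow 2).neg).div_const 2)

lemma density_measurable (θ : Euc d) : Measurable (fun y : Euc d => density G y θ) :=
  (density_continuous G θ).measurable

lemma density_integrable (θ : Euc d) : Integrable (fun y : Euc d => density G y θ) := by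
  simp only [density_eq]
  apply Integrable.const_mul
  apply integrable_finset_sum
  intro g _
  have : (fun y : Euc d => Real.exp (-‖y - (g : Iso d) θ‖ ^ 2 / 2))
      = fun y : Euc d => Real.exp (-(1/2 : ℝ) * ‖y - (g : Iso d) θ‖ ^ 2) := by
    funext y; ring_nf
  rw [this]
  exact gauss_integrable (by norm_num) _

lemma density_integral (θ : Euc d) : ∫ y : Euc d, density G y θ = 1 := by
  simp only [density_eq]
  rw [integral_const_mul, integral_finset_sum _
    (fun g _ => by
      have : (fun y : Euc d => Real.exp (-‖y - (g : Iso d) θ‖ ^ 2 / 2))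
          = fun y : Euc d => Real.exp (-(1/2 : ℝ) * ‖y - (g : Iso d) θ‖ ^ 2) := by
        funext y; ring_nf
      rw [this]; exact gauss_integrable (by norm_num) _)]
  have : ∀ g : G, ∫ y : Euc d, Real.exp (-‖y - (g : Iso d) θ‖ ^ 2 / 2)
      = (2 * π) ^ ((d : ℝ) / 2) := fun g => gauss_integral _
  rw [Finset.sum_congr rfl fun g _ => this g, Finset.sum_const, Finset.card_univ, nsmul_eq_mul]
  unfold Cd
  field_simp

lemma sqrt_density_le (y θ : Euc d) :
    Real.sqrt (density G y θ) ≤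
      Real.sqrt (Cd G) * ∑ g : G, Real.exp (-‖y - (g : Iso d) θ‖ ^ 2 / 4) := by
  rw [density_eq, Real.sqrt_mul (le_of_lt (Cd_pos G))]
  apply mul_le_mul_of_nonneg_left _ (Real.sqrt_nonneg _)
  calc Real.sqrt (∑ g : G, Real.exp (-‖y - (g : Iso d) θ‖ ^ 2 / 2))
      ≤ ∑ g : G, Real.sqrt (Real.exp (-‖y - (g : Iso d) θ‖ ^ 2 / 2)) :=
        sqrt_sum_le _ _ (fun i _ => le_of_lt (Real.exp_pos _))
    _ = ∑ g : G, Real.exp (-‖y - (g : Iso d) θ‖ ^ 2 / 4) := by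
        apply Finset.sum_congr rfl
        intro g _
        rw [← Real.exp_half]
        congr 1
        ring

/-- Integrability of sqrt (w * density) for any bounded nonneg measurable w. -/
lemma integrable_sqrt_mul (θstar : Euc d) (w : Euc d → ℝ) (hw : Measurable w) (B : ℝ)
    (h0 : ∀ y, 0 ≤ w y) (hB : ∀ y, w y ≤ B) :
    Integrable (fun y : Euc d => Real.sqrt (w y * density G y θstar)) := by
  have hB0 : 0 ≤ B := le_trans (h0 0) (hB 0)
  have hbound : Integrable (fun y : Euc d =>
      Real.sqrt B * (Real.sqrt (Cd G) * ∑ g : G, Real.exp (-‖y - (g : Iso d) θstar‖ ^ 2 / 4))) := by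
    apply Integrable.const_mul
    apply Integrable.const_mul
    apply integrable_finset_sum
    intro g _
    have : (fun y : Euc d => Real.exp (-‖y - (g : Iso d) θstar‖ ^ 2 / 4))
        = fun y : Euc d => Real.exp (-(1/4 : ℝ) * ‖y - (g : Iso d) θstar‖ ^ 2) := by
      funext y; ring_nf
    rw [this]; exact gauss_integrable (by norm_num) _
  apply hbound.mono'
  · exact (Real.continuous_sqrt.measurable.comp
      (hw.mul (density_measurable G θstar))).aestronglyMeasurable
  · filter_upwards with y
    rw [Real.norm_eq_abs, abs_of_nonneg (Real.sqrt_nonneg _)]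
    calc Real.sqrt (w y * density G y θstar)
        ≤ Real.sqrt (B * density G y θstar) := by
          apply Real.sqrt_le_sqrt
          exact mul_le_mul_of_nonneg_right (hB y) (le_of_lt (density_pos G y θstar))
      _ = Real.sqrt B * Real.sqrt (density G y θstar) := Real.sqrt_mul hB0 _
      _ ≤ Real.sqrt B * (Real.sqrt (Cd G) *
            ∑ g : G, Real.exp (-‖y - (g : Iso d) θstar‖ ^ 2 / 4)) := by
          apply mul_le_mul_of_nonneg_left (sqrt_density_le G y θstar) (Real.sqrt_nonneg _)

end MLEAux2
namespace MLEAux3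
open Real Filter MLEAux MLEAux2

/-- If a positive combination of exponential sums agree for all nonneg `s`,
the leading exponents compare. -/
lemma explode {ι : Type*} [Fintype ι] [Nonempty ι] (a b : ι → ℝ) (K1 K2 : ℝ)
    (hK1 : 0 < K1) (hK2 : 0 < K2)
    (h : ∀ s : ℝ, 0 ≤ s → K1 * ∑ i, Real.exp (s * a i) = K2 * ∑ i, Real.exp (s * b i))
    (i0 : ι) : ∃ i, a i0 ≤ b i := by
  classical
  by_contra hno
  push_neg at hno
  obtain ⟨j, _, hj⟩ := Finset.exists_max_image (Finset.univ : Finset ι) b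
    ⟨i0, Finset.mem_univ i0⟩
  set Δ := a i0 - b j with hΔdef
  have hΔ : 0 < Δ := sub_pos.2 (hno j)
  set R := K2 * (Fintype.card ι : ℝ) / K1 with hRdef
  have hcard : (0:ℝ) < (Fintype.card ι : ℝ) := by
    have : 0 < Fintype.card ι := Fintype.card_pos
    exact_mod_cast this
  have hR : 0 < R := by positivity
  have key : ∀ s : ℝ, 0 ≤ s → Real.exp (s * Δ) ≤ R := by
    intro s hs
    have h1 : K1 * Real.exp (s * a i0) ≤ K1 * ∑ i, Real.exp (s * a i) := by
      apply mul_le_mul_of_nonneg_left _ hK1.le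
      exact Finset.single_le_sum (f := fun i => Real.exp (s * a i)) (fun i _ => (Real.exp_pos _).le) (Finset.mem_univ i0)
    have h2 : ∑ i, Real.exp (s * b i) ≤ (Fintype.card ι : ℝ) * Real.exp (s * b j) := by
      calc ∑ i, Real.exp (s * b i) ≤ ∑ _i : ι, Real.exp (s * b j) := by
            apply Finset.sum_le_sum
            intro i _
            exact Real.exp_le_exp.2 (mul_le_mul_of_nonneg_left (hj i (Finset.mem_univ i)) hs)
        _ = (Fintype.card ι : ℝ) * Real.exp (s * b j) := by
            rw [Finset.sum_const, Finset.card_univ, nsmul_eq_mul]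
    have h3 : K1 * Real.exp (s * a i0) ≤ K2 * ((Fintype.card ι : ℝ) * Real.exp (s * b j)) := by
      calc K1 * Real.exp (s * a i0) ≤ K1 * ∑ i, Real.exp (s * a i) := h1
        _ = K2 * ∑ i, Real.exp (s * b i) := h s hs
        _ ≤ K2 * ((Fintype.card ι : ℝ) * Real.exp (s * b j)) :=
            mul_le_mul_of_nonneg_left h2 hK2.le
    have h4 : Real.exp (s * Δ) = Real.exp (s * a i0) / Real.exp (s * b j) := by
      rw [← Real.exp_sub]; congr 1; rw [hΔdef]; ring
    rw [h4, div_le_iff₀ (Real.exp_pos _)]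
    rw [hRdef]
    calc Real.exp (s * a i0) ≤ K2 * ((Fintype.card ι : ℝ) * Real.exp (s * b j)) / K1 := by
          rw [le_div_iff₀ hK1]; linarith [h3]
      _ = K2 * (Fintype.card ι : ℝ) / K1 * Real.exp (s * b j) := by ring
  -- now contradict with a large s
  set s := max 0 ((Real.log R + 1) / Δ) with hsdef
  have hs0 : 0 ≤ s := le_max_left _ _
  have hsD : Real.log R + 1 ≤ s * Δ := by
    have : (Real.log R + 1) / Δ ≤ s := le_max_right _ _
    calc Real.log R + 1 = (Real.log R + 1) / Δ * Δ := by field_simp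
      _ ≤ s * Δ := mul_le_mul_of_nonneg_right this hΔ.le
  have hlt : R < Real.exp (s * Δ) := by
    calc R = Real.exp (Real.log R) := (Real.exp_log hR).symm
      _ < Real.exp (Real.log R + 1) := Real.exp_lt_exp.2 (by linarith)
      _ ≤ Real.exp (s * Δ) := Real.exp_le_exp.2 hsD
  exact absurd (key s hs0) (not_le.2 hlt)

variable {d : ℕ} (G : Subgroup (Iso d)) [Fintype G]

/-- Identifiability: if no group element maps `θ0` to `θstar`, the densities differ somewhere. -/
lemma density_ne (θstar θ0 : Euc d) (hne : ∀ g : G, (g : Iso d) θ0 ≠ θstar)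
    (hpt : ∀ y, density G y θ0 = density G y θstar) : False := by
  classical
  have hS : ∀ y : Euc d, ∑ g : G, Real.exp (-‖y - (g : Iso d) θ0‖ ^ 2 / 2)
      = ∑ g : G, Real.exp (-‖y - (g : Iso d) θstar‖ ^ 2 / 2) := by
    intro y
    have := hpt y
    rw [density_eq, density_eq] at this
    exact mul_left_cancel₀ (ne_of_gt (Cd_pos G)) this
  have hterm : ∀ (c : Euc d) (ξ : Euc d) (s : ℝ),
      Real.exp (-‖s • ξ - c‖ ^ 2 / 2) * Real.exp (‖s • ξ‖ ^ 2 / 2)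
        = Real.exp (s * ⟪ξ, c⟫) * Real.exp (-‖c‖ ^ 2 / 2) := by
    intro c ξ s
    rw [← Real.exp_add, ← Real.exp_add]
    congr 1
    have h1 : ‖s • ξ - c‖ ^ 2 = ‖s • ξ‖ ^ 2 - 2 * ⟪s • ξ, c⟫ + ‖c‖ ^ 2 :=
      norm_sub_sq_real _ _
    have h2 : ⟪s • ξ, c⟫ = s * ⟪ξ, c⟫ := real_inner_smul_left _ _ _
    rw [h1, h2]; ring
  have hmgf : ∀ (ξ : Euc d) (s : ℝ), 0 ≤ s →
      Real.exp (-‖θ0‖ ^ 2 / 2) * ∑ g : G, Real.exp (s * ⟪ξ, (g : Iso d) θ0⟫)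
        = Real.exp (-‖θstar‖ ^ 2 / 2) * ∑ g : G, Real.exp (s * ⟪ξ, (g : Iso d) θstar⟫) := by
    intro ξ s _
    have h := congrArg (fun t => t * Real.exp (‖s • ξ‖ ^ 2 / 2)) (hS (s • ξ))
    simp only [Finset.sum_mul] at h
    have hL : ∀ g : G, Real.exp (-‖s • ξ - (g : Iso d) θ0‖ ^ 2 / 2) * Real.exp (‖s • ξ‖ ^ 2 / 2)
        = Real.exp (s * ⟪ξ, (g : Iso d) θ0⟫) * Real.exp (-‖θ0‖ ^ 2 / 2) := by
      intro g
      rw [hterm ((g : Iso d) θ0) ξ s, LinearIsometryEquiv.norm_map]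
    have hR : ∀ g : G, Real.exp (-‖s • ξ - (g : Iso d) θstar‖ ^ 2 / 2) * Real.exp (‖s • ξ‖ ^ 2 / 2)
        = Real.exp (s * ⟪ξ, (g : Iso d) θstar⟫) * Real.exp (-‖θstar‖ ^ 2 / 2) := by
      intro g
      rw [hterm ((g : Iso d) θstar) ξ s, LinearIsometryEquiv.norm_map]
    rw [Finset.sum_congr rfl (fun g _ => hL g), Finset.sum_congr rfl (fun g _ => hR g)] at h
    rw [← Finset.sum_mul, ← Finset.sum_mul] at h
    linarith [h]
  -- apply explode in both directions
  have hK : ∀ c : Euc d, (0:ℝ) < Real.exp (-‖c‖ ^ 2 / 2) := fun c => Real.exp_pos _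
  have h1 : ∃ g : G, ⟪θ0, ((1 : G) : Iso d) θ0⟫ ≤ ⟪θ0, (g : Iso d) θstar⟫ := by
    have := explode (ι := G) (fun g => ⟪θ0, (g : Iso d) θ0⟫)
      (fun g => ⟪θ0, (g : Iso d) θstar⟫) _ _ (hK θ0) (hK θstar)
      (fun s hs => hmgf θ0 s hs) 1
    simpa using this
  have h2 : ∃ g : G, ⟪θstar, ((1 : G) : Iso d) θstar⟫ ≤ ⟪θstar, (g : Iso d) θ0⟫ := by
    have := explode (ι := G) (fun g => ⟪θstar, (g : Iso d) θstar⟫)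
      (fun g => ⟪θstar, (g : Iso d) θ0⟫) _ _ (hK θstar) (hK θ0)
      (fun s hs => (hmgf θstar s hs).symm) 1
    simpa using this
  obtain ⟨g1, hg1⟩ := h1
  obtain ⟨g2, hg2⟩ := h2
  have hone1 : ((1 : G) : Iso d) θ0 = θ0 := by simp
  have e1 : ⟪θ0, ((1 : G) : Iso d) θ0⟫ = ‖θ0‖ ^ 2 := by
    rw [hone1]; exact real_inner_self_eq_norm_sq θ0
  have hone2 : ((1 : G) : Iso d) θstar = θstar := by simp
  have e2 : ⟪θstar, ((1 : G) : Iso d) θstar⟫ = ‖θstar‖ ^ 2 := by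
    rw [hone2]; exact real_inner_self_eq_norm_sq θstar
  have hg1' : ‖θ0‖ ^ 2 ≤ ⟪θ0, (g1 : Iso d) θstar⟫ := by
    rw [← e1]; simpa using hg1
  have hg2' : ‖θstar‖ ^ 2 ≤ ⟪θstar, (g2 : Iso d) θ0⟫ := by
    rw [← e2]; simpa using hg2
  have cs1 : ⟪θ0, (g1 : Iso d) θstar⟫ ≤ ‖θ0‖ * ‖θstar‖ := by
    calc ⟪θ0, (g1 : Iso d) θstar⟫ ≤ ‖θ0‖ * ‖(g1 : Iso d) θstar‖ := real_inner_le_norm _ _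
      _ = ‖θ0‖ * ‖θstar‖ := by rw [LinearIsometryEquiv.norm_map]
  have cs2 : ⟪θstar, (g2 : Iso d) θ0⟫ ≤ ‖θstar‖ * ‖θ0‖ := by
    calc ⟪θstar, (g2 : Iso d) θ0⟫ ≤ ‖θstar‖ * ‖(g2 : Iso d) θ0‖ := real_inner_le_norm _ _
      _ = ‖θstar‖ * ‖θ0‖ := by rw [LinearIsometryEquiv.norm_map]
  by_cases hz : θ0 = 0
  · -- then θstar = 0 too, contradiction with hne 1
    subst hz
    have : ⟪θstar, (g2 : Iso d) 0⟫ = 0 := by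
      rw [map_zero]; exact inner_zero_right _
    have hzero : ‖θstar‖ ^ 2 ≤ 0 := by rw [this] at hg2'; exact hg2'
    have : θstar = 0 := by
      have := norm_nonneg θstar
      have h9 : ‖θstar‖ = 0 := by nlinarith
      exact norm_eq_zero.1 h9
    exact hne 1 (by simp [this])
  · have hn0 : 0 < ‖θ0‖ := norm_pos_iff.2 hz
    have hle1 : ‖θ0‖ ≤ ‖θstar‖ := by nlinarith
    have hns : 0 < ‖θstar‖ := lt_of_lt_of_le hn0 hle1
    have hle2 : ‖θstar‖ ≤ ‖θ0‖ := by nlinarith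
    have heq : ‖θ0‖ = ‖θstar‖ := le_antisymm hle1 hle2
    -- equality in Cauchy-Schwarz
    have hinner : ⟪θ0, (g1 : Iso d) θstar⟫ = ‖θ0‖ * ‖(g1 : Iso d) θstar‖ := by
      rw [LinearIsometryEquiv.norm_map]
      apply le_antisymm
      · calc ⟪θ0, (g1 : Iso d) θstar⟫ ≤ ‖θ0‖ * ‖(g1 : Iso d) θstar‖ := real_inner_le_norm _ _
          _ = ‖θ0‖ * ‖θstar‖ := by rw [LinearIsometryEquiv.norm_map]
      · calc ‖θ0‖ * ‖θstar‖ = ‖θ0‖ ^ 2 := by rw [heq]; ring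
          _ ≤ ⟪θ0, (g1 : Iso d) θstar⟫ := hg1'
    have := inner_eq_norm_mul_iff_real.1 hinner
    -- ‖g1 θstar‖ • θ0 = ‖θ0‖ • g1 θstar
    rw [LinearIsometryEquiv.norm_map, ← heq] at this
    have hθeq : θ0 = (g1 : Iso d) θstar := by
      have := smul_right_injective (Euc d) (ne_of_gt hn0) this
      exact this
    -- hence g1⁻¹ θ0 = θstar, contradicting hne
    apply hne g1⁻¹
    have : ((g1⁻¹ : G) : Iso d) ((g1 : Iso d) θstar) = θstar := by
      have hco : ((g1⁻¹ : G) : Iso d) = ((g1 : G) : Iso d)⁻¹ := rfl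
      rw [hco]
      simp
    rw [hθeq]
    exact this

end MLEAux3
namespace MLEAux4
open Real Filter MLEAux MLEAux2 MLEAux3

variable {d : ℕ} (G : Subgroup (Iso d)) [Fintype G]

/-- Hellinger-affinity strictly below 1 for non-equivalent parameters. -/
lemma affinity_lt_one (θstar θ0 : Euc d) (hne : ∀ g : G, (g : Iso d) θ0 ≠ θstar) :
    ∫ y : Euc d, Real.sqrt (density G y θ0 * density G y θstar) < 1 := by
  classical
  set p : Euc d → ℝ := fun y => density G y θ0 with hp
  set q : Euc d → ℝ := fun y => density G y θstar with hq
  have ppos : ∀ y, 0 < p y := fun y => density_pos G y θ0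
  have qpos : ∀ y, 0 < q y := fun y => density_pos G y θstar
  have int_uv : Integrable (fun y : Euc d => Real.sqrt (p y * q y)) :=
    integrable_sqrt_mul G θstar p (density_measurable G θ0) (Cd G * Fintype.card G)
      (fun y => (ppos y).le) (fun y => density_le G y θ0)
  by_contra hA
  push_neg at hA
  set A : ℝ := ∫ y : Euc d, Real.sqrt (p y * q y) with hAdef
  have hexp : ∀ y, (Real.sqrt (p y) - Real.sqrt (q y)) ^ 2
      = p y + q y - 2 * Real.sqrt (p y * q y) := by
    intro y
    rw [sub_sq, Real.sq_sqrt (ppos y).le, Real.sq_sqrt (qpos y).le,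
      Real.sqrt_mul (ppos y).le]
    ring
  have hadd : Integrable (fun y : Euc d => p y + q y) :=
    (density_integrable G θ0).add (density_integrable G θstar)
  have h2m : Integrable (fun y : Euc d => 2 * Real.sqrt (p y * q y)) := int_uv.const_mul 2
  have hint2 : Integrable (fun y : Euc d => p y + q y - 2 * Real.sqrt (p y * q y)) :=
    hadd.sub h2m
  have hintF : Integrable (fun y : Euc d => (Real.sqrt (p y) - Real.sqrt (q y)) ^ 2) :=
    hint2.congr (Filter.Eventually.of_forall fun y => (hexp y).symm)
  have hI : ∫ y : Euc d, (Real.sqrt (p y) - Real.sqrt (q y)) ^ 2 = 2 - 2 * A := by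
    rw [integral_congr_ae (Filter.Eventually.of_forall hexp), integral_sub hadd h2m,
      integral_add (density_integrable G θ0) (density_integrable G θstar),
      density_integral, density_integral, integral_const_mul]
    rw [← hAdef]
    ring
  have h0 : 0 ≤ ∫ y : Euc d, (Real.sqrt (p y) - Real.sqrt (q y)) ^ 2 :=
    integral_nonneg fun y => sq_nonneg _
  have hzero : ∫ y : Euc d, (Real.sqrt (p y) - Real.sqrt (q y)) ^ 2 = 0 :=
    le_antisymm (by rw [hI]; linarith) h0
  have hae : (fun y : Euc d => (Real.sqrt (p y) - Real.sqrt (q y)) ^ 2) =ᵐ[volume] 0 :=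
    (integral_eq_zero_iff_of_nonneg (fun y => sq_nonneg _) hintF).1 hzero
  have haepq : p =ᵐ[volume] q := by
    filter_upwards [hae] with y hy
    have h1 : Real.sqrt (p y) = Real.sqrt (q y) := by
      have := sq_eq_zero_iff.1 hy
      linarith [sub_eq_zero.1 this]
    calc p y = Real.sqrt (p y) ^ 2 := (Real.sq_sqrt (ppos y).le).symm
      _ = Real.sqrt (q y) ^ 2 := by rw [h1]
      _ = q y := Real.sq_sqrt (qpos y).le
  have hpt : p = q := (Continuous.ae_eq_iff_eq volume
    (density_continuous G θ0) (density_continuous G θstar)).1 haepq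
  exact density_ne G θstar θ0 hne fun y => congrFun hpt y

/-- Envelope over a ball of radius `δ` around `θ0`. -/
def ballEnv (θ0 : Euc d) (δ : ℝ) (y : Euc d) : ℝ :=
  Cd G * ∑ g : G, Real.exp (-(max (‖y - (g : Iso d) θ0‖ - δ) 0) ^ 2 / 2)

/-- Envelope for the far region `‖θ‖ ≥ M`. -/
def farEnv (M : ℝ) (y : Euc d) : ℝ :=
  Cd G * (Fintype.card G : ℝ) * Real.exp (-(max (M - ‖y‖) 0) ^ 2 / 2)

lemma ballEnv_pos (θ0 : Euc d) (δ : ℝ) (y : Euc d) : 0 < ballEnv G θ0 δ y :=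
  mul_pos (Cd_pos G) (Finset.sum_pos (fun g _ => Real.exp_pos _) ⟨1, Finset.mem_univ 1⟩)

lemma farEnv_pos (M : ℝ) (y : Euc d) : 0 < farEnv G M y :=
  mul_pos (mul_pos (Cd_pos G) (card_pos G)) (Real.exp_pos _)

lemma exp_le_one_of_nonneg (x : ℝ) (hx : 0 ≤ x) : Real.exp (-x / 2) ≤ 1 := by
  rw [show (1:ℝ) = Real.exp 0 by simp]
  apply Real.exp_le_exp.2
  linarith

lemma ballEnv_le (θ0 : Euc d) (δ : ℝ) (y : Euc d) :
    ballEnv G θ0 δ y ≤ Cd G * Fintype.card G := by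
  unfold ballEnv
  have h : ∑ g : G, Real.exp (-(max (‖y - (g : Iso d) θ0‖ - δ) 0) ^ 2 / 2)
      ≤ ∑ _g : G, (1:ℝ) := by
    apply Finset.sum_le_sum
    intro g _
    exact exp_le_one_of_nonneg _ (sq_nonneg _)
  have h2 : (∑ _g : G, (1:ℝ)) = (Fintype.card G : ℝ) := by simp
  calc Cd G * ∑ g : G, Real.exp (-(max (‖y - (g : Iso d) θ0‖ - δ) 0) ^ 2 / 2)
      ≤ Cd G * ∑ _g : G, (1:ℝ) := mul_le_mul_of_nonneg_left h (Cd_pos G).le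
    _ = Cd G * Fintype.card G := by rw [h2]

lemma farEnv_le (M : ℝ) (y : Euc d) : farEnv G M y ≤ Cd G * Fintype.card G := by
  unfold farEnv
  have := exp_le_one_of_nonneg ((max (M - ‖y‖) 0) ^ 2) (sq_nonneg _)
  calc Cd G * (Fintype.card G : ℝ) * Real.exp (-(max (M - ‖y‖) 0) ^ 2 / 2)
      ≤ Cd G * (Fintype.card G : ℝ) * 1 := by
        have hcc : 0 ≤ Cd G * (Fintype.card G : ℝ) := by
          have := Cd_pos G; have := card_pos G; positivity
        exact mul_le_mul_of_nonneg_left this hcc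
    _ = Cd G * Fintype.card G := by ring

lemma ballEnv_continuous (θ0 : Euc d) (δ : ℝ) : Continuous (ballEnv G θ0 δ) := by
  apply Continuous.mul continuous_const
  apply continuous_finset_sum
  intro g _
  apply Real.continuous_exp.comp
  apply Continuous.div_const
  apply Continuous.neg
  apply Continuous.pow
  exact ((continuous_id.sub continuous_const).norm.sub continuous_const).max continuous_const

lemma farEnv_continuous (M : ℝ) : Continuous (farEnv G M) := by
  apply Continuous.mul continuous_const
  apply Real.continuous_exp.comp
  apply Continuous.div_const
  apply Continuous.neg
  apply Continuous.pow
  exact ((continuous_const.sub continuous_norm).max continuous_const)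

lemma density_le_ballEnv (θ0 θ : Euc d) (δ : ℝ) (hθ : dist θ θ0 ≤ δ) (y : Euc d) :
    density G y θ ≤ ballEnv G θ0 δ y := by
  rw [density_eq]
  unfold ballEnv
  apply mul_le_mul_of_nonneg_left _ (Cd_pos G).le
  apply Finset.sum_le_sum
  intro g _
  apply Real.exp_le_exp.2
  have key : max (‖y - (g : Iso d) θ0‖ - δ) 0 ≤ ‖y - (g : Iso d) θ‖ := by
    apply max_le _ (norm_nonneg _)
    have h1 : ‖y - (g : Iso d) θ0‖ - ‖y - (g : Iso d) θ‖
        ≤ ‖(y - (g : Iso d) θ0) - (y - (g : Iso d) θ)‖ := norm_sub_norm_le _ _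
    have h2 : (y - (g : Iso d) θ0) - (y - (g : Iso d) θ) = (g : Iso d) θ - (g : Iso d) θ0 := by
      abel
    have h3 : ‖(g : Iso d) θ - (g : Iso d) θ0‖ = dist θ θ0 := by
      rw [← dist_eq_norm, LinearIsometryEquiv.dist_map]
    rw [h2, h3] at h1
    linarith
  have hsq : (max (‖y - (g : Iso d) θ0‖ - δ) 0) ^ 2 ≤ ‖y - (g : Iso d) θ‖ ^ 2 :=
    pow_le_pow_left₀ (le_max_right _ _) key 2
  linarith

lemma density_le_farEnv (M : ℝ) (θ : Euc d) (hθ : M ≤ ‖θ‖) (y : Euc d) :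
    density G y θ ≤ farEnv G M y := by
  rw [density_eq]
  unfold farEnv
  have hterm : ∀ g : G, Real.exp (-‖y - (g : Iso d) θ‖ ^ 2 / 2)
      ≤ Real.exp (-(max (M - ‖y‖) 0) ^ 2 / 2) := by
    intro g
    apply Real.exp_le_exp.2
    have key : max (M - ‖y‖) 0 ≤ ‖y - (g : Iso d) θ‖ := by
      apply max_le _ (norm_nonneg _)
      have h1 : ‖(g : Iso d) θ‖ - ‖y‖ ≤ ‖(g : Iso d) θ - y‖ := norm_sub_norm_le _ _
      have h2 : ‖(g : Iso d) θ - y‖ = ‖y - (g : Iso d) θ‖ := norm_sub_rev _ _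
      have h3 : ‖(g : Iso d) θ‖ = ‖θ‖ := LinearIsometryEquiv.norm_map _ _
      rw [h2, h3] at h1
      linarith
    have hsq : (max (M - ‖y‖) 0) ^ 2 ≤ ‖y - (g : Iso d) θ‖ ^ 2 :=
      pow_le_pow_left₀ (le_max_right _ _) key 2
    linarith
  calc Cd G * ∑ g : G, Real.exp (-‖y - (g : Iso d) θ‖ ^ 2 / 2)
      ≤ Cd G * ∑ _g : G, Real.exp (-(max (M - ‖y‖) 0) ^ 2 / 2) :=
        mul_le_mul_of_nonneg_left (Finset.sum_le_sum fun g _ => hterm g) (Cd_pos G).le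
    _ = Cd G * (Fintype.card G : ℝ) * Real.exp (-(max (M - ‖y‖) 0) ^ 2 / 2) := by
        rw [Finset.sum_const, Finset.card_univ, nsmul_eq_mul]; ring

end MLEAux4
namespace MLEAux5
open Real Filter MLEAux MLEAux2 MLEAux3 MLEAux4
open scoped Topology

variable {d : ℕ} (G : Subgroup (Iso d)) [Fintype G]

lemma ballEnv_zero (θ0 y : Euc d) : ballEnv G θ0 0 y = density G y θ0 := by
  rw [density_eq]
  unfold ballEnv
  congr 1
  apply Finset.sum_congr rfl
  intro g _
  congr 2
  rw [sub_zero, max_eq_left (norm_nonneg _)]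

lemma sqrt_env_meas (θstar : Euc d) (h : Euc d → ℝ) (hc : Continuous h) :
    AEStronglyMeasurable (fun y : Euc d => Real.sqrt (h y * density G y θstar)) volume :=
  (Real.continuous_sqrt.comp (hc.mul (density_continuous G θstar))).aestronglyMeasurable

lemma bound_int (θstar : Euc d) :
    Integrable (fun y : Euc d =>
      Real.sqrt ((Cd G * Fintype.card G) * density G y θstar)) := by
  have hB0 : 0 ≤ Cd G * (Fintype.card G:ℝ) := by
    have := Cd_pos G; have := card_pos G; positivity
  exact integrable_sqrt_mul G θstar (fun _ => Cd G * Fintype.card G) measurable_const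
    (Cd G * Fintype.card G) (fun _ => hB0) (fun _ => le_rfl)

lemma exists_far (θstar : Euc d) :
    ∃ M : ℝ, ∫ y : Euc d, Real.sqrt (farEnv G M y * density G y θstar) < 1 := by
  have hlim : Tendsto
      (fun k : ℕ => ∫ y : Euc d, Real.sqrt (farEnv G (k : ℝ) y * density G y θstar))
      atTop (𝓝 (∫ _y : Euc d, (0:ℝ))) := by
    apply tendsto_integral_of_dominated_convergence
      (bound := fun y => Real.sqrt ((Cd G * Fintype.card G) * density G y θstar))
    · intro n; exact sqrt_env_meas G θstar _ (farEnv_continuous G _)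
    · exact bound_int G θstar
    · intro n
      filter_upwards with y
      rw [Real.norm_eq_abs, abs_of_nonneg (Real.sqrt_nonneg _)]
      apply Real.sqrt_le_sqrt
      exact mul_le_mul_of_nonneg_right (farEnv_le G _ y) (density_pos G y θstar).le
    · filter_upwards with y
      have h1 : Tendsto (fun k : ℕ => (k : ℝ) - ‖y‖) atTop atTop := by
        simpa [sub_eq_add_neg] using
          tendsto_atTop_add_const_right atTop (-‖y‖) tendsto_natCast_atTop_atTop
      have h2 : Tendsto (fun k : ℕ => max ((k : ℝ) - ‖y‖) 0) atTop atTop :=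
        tendsto_atTop_mono (fun k => le_max_left _ _) h1
      have h3 : Tendsto (fun k : ℕ => (max ((k : ℝ) - ‖y‖) 0) ^ 2) atTop atTop := by
        have heq : (fun k : ℕ => (max ((k : ℝ) - ‖y‖) 0) ^ 2)
            = fun k : ℕ => (max ((k : ℝ) - ‖y‖) 0) * (max ((k : ℝ) - ‖y‖) 0) := by
          funext k; ring
        rw [heq]
        exact h2.atTop_mul_atTop₀ h2
      have h4 : Tendsto (fun k : ℕ => -(max ((k : ℝ) - ‖y‖) 0) ^ 2 / 2) atTop atBot := by
        have h3' : Tendsto (fun k : ℕ => (max ((k : ℝ) - ‖y‖) 0) ^ 2 / 2) atTop atTop :=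
          h3.atTop_div_const (by norm_num)
        have : (fun k : ℕ => -(max ((k : ℝ) - ‖y‖) 0) ^ 2 / 2)
            = fun k : ℕ => -((max ((k : ℝ) - ‖y‖) 0) ^ 2 / 2) := by funext k; ring
        rw [this]
        exact tendsto_neg_atBot_iff.mpr h3'
      have h5 : Tendsto (fun k : ℕ => Real.exp (-(max ((k : ℝ) - ‖y‖) 0) ^ 2 / 2))
          atTop (𝓝 0) := Real.tendsto_exp_atBot.comp h4
      have h6 : Tendsto (fun k : ℕ => farEnv G (k : ℝ) y * density G y θstar) atTop (𝓝 0) := by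
        have h8 := (h5.const_mul (Cd G * (Fintype.card G : ℝ))).mul_const (density G y θstar)
        simp only [mul_zero, zero_mul] at h8
        exact h8
      have h9 := (Real.continuous_sqrt.tendsto 0).comp h6
      simpa [Function.comp_def] using h9
  rw [integral_zero] at hlim
  obtain ⟨k, hk⟩ := (hlim.eventually_lt_const one_pos).exists
  exact ⟨(k : ℝ), hk⟩

lemma exists_ball (θstar θ0 : Euc d) (hne : ∀ g : G, (g : Iso d) θ0 ≠ θstar) :
    ∃ δ : ℝ, 0 < δ ∧
      ∫ y : Euc d, Real.sqrt (ballEnv G θ0 δ y * density G y θstar) < 1 := by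
  have hAlt := affinity_lt_one G θstar θ0 hne
  have hlim : Tendsto
      (fun k : ℕ => ∫ y : Euc d,
        Real.sqrt (ballEnv G θ0 (1 / ((k : ℝ) + 1)) y * density G y θstar))
      atTop (𝓝 (∫ y : Euc d, Real.sqrt (density G y θ0 * density G y θstar))) := by
    apply tendsto_integral_of_dominated_convergence
      (bound := fun y => Real.sqrt ((Cd G * Fintype.card G) * density G y θstar))
    · intro n; exact sqrt_env_meas G θstar _ (ballEnv_continuous G _ _)
    · exact bound_int G θstar
    · intro n
      filter_upwards with y
      rw [Real.norm_eq_abs, abs_of_nonneg (Real.sqrt_nonneg _)]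
      apply Real.sqrt_le_sqrt
      exact mul_le_mul_of_nonneg_right (ballEnv_le G _ _ y) (density_pos G y θstar).le
    · filter_upwards with y
      have hφ : Continuous (fun δ : ℝ => ballEnv G θ0 δ y) := by
        apply Continuous.mul continuous_const
        apply continuous_finset_sum
        intro g _
        apply Real.continuous_exp.comp
        apply Continuous.div_const
        apply Continuous.neg
        apply Continuous.pow
        exact (continuous_const.sub continuous_id).max continuous_const
      have h1 : Tendsto (fun k : ℕ => ballEnv G θ0 (1 / ((k : ℝ) + 1)) y) atTop
          (𝓝 (ballEnv G θ0 0 y)) :=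
        (hφ.tendsto 0).comp tendsto_one_div_add_atTop_nhds_zero_nat
      rw [ballEnv_zero] at h1
      have h2 := h1.mul_const (density G y θstar)
      have h3 := (Real.continuous_sqrt.tendsto _).comp h2
      exact h3
  obtain ⟨k, hk⟩ := (hlim.eventually_lt_const hAlt).exists
  refine ⟨1 / ((k : ℝ) + 1), by positivity, hk⟩

end MLEAux5
namespace MLEAux6
open Real Filter MLEAux MLEAux2 MLEAux3 MLEAux4 MLEAux5 ProbabilityTheory
open scoped Topology ENNReal

variable {d : ℕ} (G : Subgroup (Iso d)) [Fintype G]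

lemma key_bound (θstar : Euc d) {Ω : Type*} [MeasurableSpace Ω] (P : Measure Ω)
    [IsProbabilityMeasure P] (Y : ℕ → Ω → Euc d) (hYmeas : ∀ i, Measurable (Y i))
    (hindep : ProbabilityTheory.iIndepFun Y P)
    (hlaw : ∀ i, P.map (Y i) =
      (volume : Measure (Euc d)).withDensity (fun y => ENNReal.ofReal (density G y θstar)))
    (h : Euc d → ℝ) (hcont : Continuous h) (hpos : ∀ y, 0 < h y)
    (hint : Integrable (fun y : Euc d => Real.sqrt (h y * density G y θstar)))
    (n : ℕ) :
    P {ω | ∑ i ∈ Finset.range n, Real.log (density G (Y i ω) θstar)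
        ≤ ∑ i ∈ Finset.range n, Real.log (h (Y i ω))}
      ≤ ENNReal.ofReal (∫ y : Euc d, Real.sqrt (h y * density G y θstar)) ^ n := by
  classical
  set Q : Euc d → ℝ≥0∞ := fun y => ENNReal.ofReal (Real.sqrt (h y / density G y θstar))
    with hQdef
  have hQmeas : Measurable Q :=
    (Measurable.sqrt (hcont.measurable.div (density_measurable G θstar))).ennreal_ofReal
  set F : Ω → ℝ≥0∞ := fun ω => ∏ i ∈ Finset.range n, Q (Y i ω) with hFdef
  have hFmeas : Measurable F :=
    Finset.measurable_prod _ fun i _ => hQmeas.comp (hYmeas i)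
  -- event inclusion
  have hincl : {ω | ∑ i ∈ Finset.range n, Real.log (density G (Y i ω) θstar)
      ≤ ∑ i ∈ Finset.range n, Real.log (h (Y i ω))} ⊆ {ω | 1 ≤ F ω} := by
    intro ω hω
    simp only [Set.mem_setOf_eq] at hω ⊢
    have h1 := Real.exp_le_exp.2 hω
    rw [Real.exp_sum, Real.exp_sum] at h1
    rw [Finset.prod_congr rfl (fun i _ => Real.exp_log (density_pos G (Y i ω) θstar)),
      Finset.prod_congr rfl (fun i (_ : i ∈ Finset.range n) => Real.exp_log (hpos (Y i ω)))]
      at h1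
    have hfpos : 0 < ∏ i ∈ Finset.range n, density G (Y i ω) θstar :=
      Finset.prod_pos fun i _ => density_pos G (Y i ω) θstar
    have hratio : 1 ≤ ∏ i ∈ Finset.range n, (h (Y i ω) / density G (Y i ω) θstar) := by
      rw [Finset.prod_div_distrib, le_div_iff₀ hfpos, one_mul]
      exact h1
    have hsq : 1 ≤ ∏ i ∈ Finset.range n,
        Real.sqrt (h (Y i ω) / density G (Y i ω) θstar) := by
      have h2 := Real.sqrt_le_sqrt hratio
      rw [Real.sqrt_one] at h2
      rw [← sqrt_prod _ _ fun i _ =>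
        div_nonneg (hpos (Y i ω)).le (density_pos G (Y i ω) θstar).le]
      exact h2
    calc (1:ℝ≥0∞) = ENNReal.ofReal 1 := ENNReal.ofReal_one.symm
      _ ≤ ENNReal.ofReal (∏ i ∈ Finset.range n,
            Real.sqrt (h (Y i ω) / density G (Y i ω) θstar)) :=
          ENNReal.ofReal_le_ofReal hsq
      _ = F ω := ENNReal.ofReal_prod_of_nonneg fun i _ => Real.sqrt_nonneg _
  -- Markov
  have hmarkov : P {ω | 1 ≤ F ω} ≤ ∫⁻ ω, F ω ∂P := by
    simpa using mul_meas_ge_le_lintegral₀ hFmeas.aemeasurable 1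
  -- independence
  have hprodint : ∀ m : ℕ, ∫⁻ ω, ∏ i ∈ Finset.range m, Q (Y i ω) ∂P
      = ∏ i ∈ Finset.range m, ∫⁻ ω, Q (Y i ω) ∂P := by
    intro m
    induction m with
    | zero => simp
    | succ m ih =>
      have hcomp : iIndepFun (fun i => Q ∘ Y i) P :=
        hindep.comp (fun _ => Q) fun _ => hQmeas
      have hind : IndepFun (∏ j ∈ Finset.range m, (Q ∘ Y j)) (Q ∘ Y m) P :=
        hcomp.indepFun_prod_range_succ (fun i => hQmeas.comp (hYmeas i)) m
      have hfun : (∏ j ∈ Finset.range m, (Q ∘ Y j)) = fun ω => ∏ j ∈ Finset.range m,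
          Q (Y j ω) := by
        funext ω
        simp [Finset.prod_apply]
      have hmf : Measurable (∏ j ∈ Finset.range m, (Q ∘ Y j)) := by
        rw [hfun]
        exact Finset.measurable_prod _ fun i _ => hQmeas.comp (hYmeas i)
      have heq := lintegral_mul_eq_lintegral_mul_lintegral_of_indepFun (μ := P)
        hmf (hQmeas.comp (hYmeas m)) hind
      have hlhs : (fun ω => ((∏ j ∈ Finset.range m, (Q ∘ Y j)) * (Q ∘ Y m)) ω)
          = fun ω => ∏ i ∈ Finset.range (m + 1), Q (Y i ω) := by
        funext ω
        simp [Finset.prod_apply, Finset.prod_range_succ]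
      rw [hlhs] at heq
      rw [heq, hfun] at *
      rw [Finset.prod_range_succ, ← ih]
      rfl
  -- single factor
  have hone : ∀ i : ℕ, ∫⁻ ω, Q (Y i ω) ∂P
      = ENNReal.ofReal (∫ y : Euc d, Real.sqrt (h y * density G y θstar)) := by
    intro i
    rw [← lintegral_map hQmeas (hYmeas i), hlaw i,
      lintegral_withDensity_eq_lintegral_mul volume
        ((density_measurable G θstar).ennreal_ofReal) hQmeas]
    have hpt : ∀ y : Euc d,
        ((fun y => ENNReal.ofReal (density G y θstar)) * Q) y
          = ENNReal.ofReal (Real.sqrt (h y * density G y θstar)) := by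
      intro y
      have fpos := density_pos G y θstar
      have : density G y θstar * Real.sqrt (h y / density G y θstar)
          = Real.sqrt (h y * density G y θstar) := by
        rw [Real.sqrt_div (hpos y).le]
        rw [Real.sqrt_mul (hpos y).le]
        have hf : density G y θstar / Real.sqrt (density G y θstar)
            = Real.sqrt (density G y θstar) := Real.div_sqrt
        calc density G y θstar * (Real.sqrt (h y) / Real.sqrt (density G y θstar))
            = Real.sqrt (h y) * (density G y θstar / Real.sqrt (density G y θstar)) := by
              ring
          _ = Real.sqrt (h y) * Real.sqrt (density G y θstar) := by rw [hf]
      simp only [Pi.mul_apply, hQdef]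
      rw [← ENNReal.ofReal_mul fpos.le, this]
    rw [lintegral_congr hpt,
      ← ofReal_integral_eq_lintegral_ofReal hint (ae_of_all _ fun y => Real.sqrt_nonneg _)]
  calc P {ω | ∑ i ∈ Finset.range n, Real.log (density G (Y i ω) θstar)
        ≤ ∑ i ∈ Finset.range n, Real.log (h (Y i ω))}
      ≤ P {ω | 1 ≤ F ω} := measure_mono hincl
    _ ≤ ∫⁻ ω, F ω ∂P := hmarkov
    _ = ∏ i ∈ Finset.range n, ∫⁻ ω, Q (Y i ω) ∂P := hprodint n
    _ = ∏ _i ∈ Finset.range n,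
          ENNReal.ofReal (∫ y : Euc d, Real.sqrt (h y * density G y θstar)) :=
        Finset.prod_congr rfl fun i _ => hone i
    _ = ENNReal.ofReal (∫ y : Euc d, Real.sqrt (h y * density G y θstar)) ^ n := by
        rw [Finset.prod_const, Finset.card_range]

end MLEAux6
open Real Filter MLEAux MLEAux2 MLEAux3 MLEAux4 MLEAux5 MLEAux6
open scoped Topology ENNReal

/-- Consistency of the MLE. If `Y_1, Y_2, …` are i.i.d. with
distribution `P_{θ*}` (density `L(·,θ*)` w.r.t. Lebesgue measure) and `θ̂_n` is a
maximum likelihood estimator built from `Y_1, …, Y_n`, then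
`ρ(θ̂_n, θ*) = min_{g∈G} ‖g θ̂_n - θ*‖ → 0` in probability. -/
theorem mle_consistency {d : ℕ} (G : Subgroup (Iso d)) [Fintype G] (θstar : Euc d)
    {Ω : Type*} [MeasurableSpace Ω] (P : Measure Ω) [IsProbabilityMeasure P]
    (Y : ℕ → Ω → Euc d) (hYmeas : ∀ i, Measurable (Y i))
    (hindep : ProbabilityTheory.iIndepFun Y P)
    (hlaw : ∀ i, P.map (Y i) =
      (volume : Measure (Euc d)).withDensity (fun y => ENNReal.ofReal (density G y θstar)))
    (θhat : ℕ → Ω → Euc d) (hθmeas : ∀ n, Measurable (θhat n))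
    (hmle : ∀ n : ℕ, ∀ᵐ ω ∂P, ∀ θ : Euc d,
      ∑ i ∈ Finset.range n, Real.log (density G (Y i ω) θ) ≤
        ∑ i ∈ Finset.range n, Real.log (density G (Y i ω) (θhat n ω)))
    (ε : ℝ) (hε : 0 < ε) :
    Filter.Tendsto
      (fun n : ℕ => P {ω | ε < ⨅ g : G, ‖(g : Iso d) (θhat n ω) - θstar‖})
      Filter.atTop (nhds 0) := by
  classical
  set Sε : Set (Euc d) := {θ : Euc d | ∀ g : G, ε ≤ ‖(g : Iso d) θ - θstar‖} with hSεdef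
  have hSclosed : IsClosed Sε := by
    have heq : Sε = ⋂ g : G, {θ : Euc d | ε ≤ ‖(g : Iso d) θ - θstar‖} := by
      ext θ; simp [hSεdef, Set.mem_iInter]
    rw [heq]
    exact isClosed_iInter fun g => isClosed_le continuous_const
      (((g : Iso d).continuous.sub continuous_const).norm)
  obtain ⟨M, hM⟩ := exists_far G θstar
  set K : Set (Euc d) := Metric.closedBall 0 M ∩ Sε with hKdef
  have hKcomp : IsCompact K := (isCompact_closedBall 0 M).inter_right hSclosed
  have hmemSne : ∀ θ0 : Euc d, θ0 ∈ Sε → ∀ g : G, (g : Iso d) θ0 ≠ θstar := by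
    intro θ0 hθ0 g heq
    have h1 := hθ0 g
    rw [heq, sub_self, norm_zero] at h1
    linarith
  have hchoice : ∀ θ0 : Euc d, ∃ δ : ℝ, 0 < δ ∧ (θ0 ∈ Sε →
      ∫ y : Euc d, Real.sqrt (ballEnv G θ0 δ y * density G y θstar) < 1) := by
    intro θ0
    by_cases hθ0 : θ0 ∈ Sε
    · obtain ⟨δ, hδ, hlt⟩ := exists_ball G θstar θ0 (hmemSne θ0 hθ0)
      exact ⟨δ, hδ, fun _ => hlt⟩
    · exact ⟨1, one_pos, fun hc => absurd hc hθ0⟩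
  choose δf hδpos hδlt using hchoice
  obtain ⟨t, htK, hcov⟩ := hKcomp.elim_nhds_subcover (fun x => Metric.ball x (δf x))
    fun x _ => Metric.ball_mem_nhds x (hδpos x)
  set aM : ℝ := ∫ y : Euc d, Real.sqrt (farEnv G M y * density G y θstar) with haM
  set aB : Euc d → ℝ :=
    fun x => ∫ y : Euc d, Real.sqrt (ballEnv G x (δf x) y * density G y θstar) with haB
  have hCB : (0:ℝ) ≤ Cd G * (Fintype.card G : ℝ) := by
    have := Cd_pos G; have := card_pos G; positivity
  have hfarint : Integrable
      (fun y : Euc d => Real.sqrt (farEnv G M y * density G y θstar)) :=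
    integrable_sqrt_mul G θstar (farEnv G M) (farEnv_continuous G M).measurable
      (Cd G * Fintype.card G) (fun y => (farEnv_pos G M y).le) (farEnv_le G M)
  have hballint : ∀ x : Euc d, Integrable
      (fun y : Euc d => Real.sqrt (ballEnv G x (δf x) y * density G y θstar)) :=
    fun x => integrable_sqrt_mul G θstar (ballEnv G x (δf x))
      (ballEnv_continuous G x (δf x)).measurable (Cd G * Fintype.card G)
      (fun y => (ballEnv_pos G x (δf x) y).le) (ballEnv_le G x (δf x))
  have hPbound : ∀ n : ℕ, P {ω | ε < ⨅ g : G, ‖(g : Iso d) (θhat n ω) - θstar‖}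
      ≤ ENNReal.ofReal aM ^ n + ∑ x ∈ t, ENNReal.ofReal (aB x) ^ n := by
    intro n
    have hae : ({ω | ε < ⨅ g : G, ‖(g : Iso d) (θhat n ω) - θstar‖} : Set Ω)
        ≤ᵐ[P] ((({ω | ∑ i ∈ Finset.range n, Real.log (density G (Y i ω) θstar)
            ≤ ∑ i ∈ Finset.range n, Real.log (farEnv G M (Y i ω))} : Set Ω)
          ∪ ⋃ x ∈ t, {ω | ∑ i ∈ Finset.range n, Real.log (density G (Y i ω) θstar)
            ≤ ∑ i ∈ Finset.range n, Real.log (ballEnv G x (δf x) (Y i ω))}) : Set Ω) := by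
      filter_upwards [hmle n] with ω hω hmem
      have hbdd : BddBelow (Set.range fun g : G => ‖(g : Iso d) (θhat n ω) - θstar‖) :=
        ⟨0, by rintro _ ⟨g, rfl⟩; exact norm_nonneg _⟩
      have hS : θhat n ω ∈ Sε := by
        intro g
        exact le_of_lt (lt_of_lt_of_le hmem (ciInf_le hbdd g))
      have hstar : ∑ i ∈ Finset.range n, Real.log (density G (Y i ω) θstar)
          ≤ ∑ i ∈ Finset.range n, Real.log (density G (Y i ω) (θhat n ω)) := hω θstar
      by_cases hnorm : ‖θhat n ω‖ ≤ M
      · have hmemK : θhat n ω ∈ K :=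
          ⟨mem_closedBall_zero_iff.2 hnorm, hS⟩
        obtain ⟨x, hxt, hxball⟩ := Set.mem_iUnion₂.1 (hcov hmemK)
        refine Or.inr (Set.mem_iUnion₂.2 ⟨x, hxt, ?_⟩)
        simp only [Set.mem_setOf_eq]
        refine le_trans hstar (Finset.sum_le_sum fun i _ => ?_)
        exact Real.log_le_log (density_pos G (Y i ω) (θhat n ω))
          (density_le_ballEnv G x (θhat n ω) (δf x)
            (le_of_lt (Metric.mem_ball.1 hxball)) (Y i ω))
      · refine Or.inl ?_
        simp only [Set.mem_setOf_eq]
        refine le_trans hstar (Finset.sum_le_sum fun i _ => ?_)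
        exact Real.log_le_log (density_pos G (Y i ω) (θhat n ω))
          (density_le_farEnv G M (θhat n ω) (le_of_lt (not_le.1 hnorm)) (Y i ω))
    calc P {ω | ε < ⨅ g : G, ‖(g : Iso d) (θhat n ω) - θstar‖}
        ≤ P ({ω | ∑ i ∈ Finset.range n, Real.log (density G (Y i ω) θstar)
            ≤ ∑ i ∈ Finset.range n, Real.log (farEnv G M (Y i ω))}
          ∪ ⋃ x ∈ t, {ω | ∑ i ∈ Finset.range n, Real.log (density G (Y i ω) θstar)
            ≤ ∑ i ∈ Finset.range n, Real.log (ballEnv G x (δf x) (Y i ω))}) :=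
          measure_mono_ae hae
      _ ≤ P {ω | ∑ i ∈ Finset.range n, Real.log (density G (Y i ω) θstar)
            ≤ ∑ i ∈ Finset.range n, Real.log (farEnv G M (Y i ω))}
          + P (⋃ x ∈ t, {ω | ∑ i ∈ Finset.range n, Real.log (density G (Y i ω) θstar)
            ≤ ∑ i ∈ Finset.range n, Real.log (ballEnv G x (δf x) (Y i ω))}) :=
          measure_union_le _ _
      _ ≤ P {ω | ∑ i ∈ Finset.range n, Real.log (density G (Y i ω) θstar)
            ≤ ∑ i ∈ Finset.range n, Real.log (farEnv G M (Y i ω))}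
          + ∑ x ∈ t, P {ω | ∑ i ∈ Finset.range n, Real.log (density G (Y i ω) θstar)
            ≤ ∑ i ∈ Finset.range n, Real.log (ballEnv G x (δf x) (Y i ω))} := by
          gcongr
          exact measure_biUnion_finset_le _ _
      _ ≤ ENNReal.ofReal aM ^ n + ∑ x ∈ t, ENNReal.ofReal (aB x) ^ n := by
          gcongr
          · exact key_bound G θstar P Y hYmeas hindep hlaw (farEnv G M)
              (farEnv_continuous G M) (farEnv_pos G M) hfarint n
          · next x hx =>
              exact key_bound G θstar P Y hYmeas hindep hlaw (ballEnv G x (δf x))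
                (ballEnv_continuous G x (δf x)) (ballEnv_pos G x (δf x)) (hballint x) n
  have htend : Tendsto (fun n : ℕ =>
      ENNReal.ofReal aM ^ n + ∑ x ∈ t, ENNReal.ofReal (aB x) ^ n) atTop (𝓝 0) := by
    have h1 : Tendsto (fun n : ℕ => ENNReal.ofReal aM ^ n) atTop (𝓝 0) :=
      ENNReal.tendsto_pow_atTop_nhds_zero_of_lt_one (ENNReal.ofReal_lt_one.2 hM)
    have h2 : Tendsto (fun n : ℕ => ∑ x ∈ t, ENNReal.ofReal (aB x) ^ n) atTop
        (𝓝 (∑ x ∈ t, 0)) := by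
      apply tendsto_finset_sum
      intro x hx
      exact ENNReal.tendsto_pow_atTop_nhds_zero_of_lt_one
        (ENNReal.ofReal_lt_one.2 (hδlt x ((htK x hx).2)))
    rw [Finset.sum_const, smul_zero] at h2
    have := h1.add h2
    simpa using this
  exact tendsto_of_tendsto_of_tendsto_of_le_of_le tendsto_const_nhds htend
    (fun n => zero_le) hPbound
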